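/- Let n ≥ 2 and let ε ∈ Aut Aₙ have order 3. Then ε ∈ W(Aₙ), and rank Aₙ^ε = n − 2c for some integer c with 1 ≤ c ≤ (n+1)/3. Moreover, if ε₁, ε₂ ∈ Aut Aₙ both have order 3 and rank Aₙ^{ε₁} = rank Aₙ^{ε₂}, then ε₁ and ε₂ are conjugate by an element of W(Aₙ). -/

import Mathlib

/-- The multiplicative group structure on `AddAut A` that older Mathlib provided
(`AddAut.group`): `g * h = h.trans g`, `1 = refl`, `g⁻¹ = g.symm`. -/
instance AddAut.groupMulOld {A : Type*} [Add A] : Group (AddAut A) where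
  mul g h := AddEquiv.trans h g
  one := AddEquiv.refl _
  inv := AddEquiv.symm
  mul_assoc _ _ _ := rfl
  one_mul _ := rfl
  mul_one _ := rfl
  inv_mul_cancel := AddEquiv.self_trans_symm

section Infra
variable {L : Type*} [AddCommGroup L]

/-- The subgroup of fixed points of an automorphism of an abelian group. -/
def fixedPts (f : AddAut L) : AddSubgroup L where
  carrier := {x | f x = x}
  add_mem' := by
    intro a b ha hb
    simp only [Set.mem_setOf_eq, map_add] at *
    rw [ha, hb]
  zero_mem' := by simp
  neg_mem' := by
    intro a ha
    simp only [Set.mem_setOf_eq, map_neg] at *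
    rw [ha]

/-- The isometry group of a `ℤ`-valued form: the group of all automorphisms of the
additive group preserving the form.  For a lattice `(L, B)` this is `Aut L`. -/
def IsometryGrp (B : L → L → ℤ) : Subgroup (AddAut L) where
  carrier := {f | ∀ x y, B (f x) (f y) = B x y}
  one_mem' := by intro x y; rfl
  mul_mem' := by
    intro a b ha hb x y
    have h : ∀ z, (a * b) z = a (b z) := fun z => rfl
    simp only [Set.mem_setOf_eq] at *
    rw [h, h, ha, hb]
  inv_mem' := by
    intro a ha x y
    simp only [Set.mem_setOf_eq] at *
    have h := ha (a⁻¹ x) (a⁻¹ y)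
    have h1 : a (a⁻¹ x) = x := a.apply_symm_apply x
    have h2 : a (a⁻¹ y) = y := a.apply_symm_apply y
    rw [h1, h2] at h
    exact h.symm

/-- The Weyl group of a lattice `(L, B)`: the subgroup generated by the reflections
`r_α : x ↦ x − B(x,α)•α` in the norm-2 vectors `α`. -/
def WeylGrp (B : L → L → ℤ) : Subgroup (AddAut L) :=
  Subgroup.closure {w | ∃ α : L, B α α = 2 ∧ ∀ x, w x = x - B x α • α}

/-- The root lattice of `(L, B)`: the subgroup generated by the norm-2 vectors. -/
def rootLat (B : L → L → ℤ) : AddSubgroup L :=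
  AddSubgroup.closure {α | B α α = 2}

/-- The rank of the fixed-point sublattice of an automorphism. -/
noncomputable def fixedRank (f : AddAut L) : ℕ :=
  Module.finrank ℤ ↥(fixedPts f)

end Infra

/-- An isomorphism of lattices: an isomorphism of the underlying abelian groups
(equivalently, a `ℤ`-linear isomorphism) preserving the forms. -/
def FormIso {M N : Type*} [AddCommGroup M] [AddCommGroup N]
    (BM : M → M → ℤ) (BN : N → N → ℤ) : Prop :=
  ∃ e : M ≃+ N, ∀ x y, BN (e x) (e y) = BM x y

/-- The standard dot product on `ι → ℤ`. -/
def dotF {ι : Type*} [Fintype ι] (x y : ι → ℤ) : ℤ := ∑ i, x i * y i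

/-- The root lattice `Aₙ ⊆ ℤ^{n+1}`. -/
def AnS (n : ℕ) : AddSubgroup (Fin (n + 1) → ℤ) where
  carrier := {x | ∑ i, x i = 0}
  add_mem' := by
    intro a b ha hb
    simp only [Set.mem_setOf_eq, Pi.add_apply, Finset.sum_add_distrib] at *
    rw [ha, hb]; ring
  zero_mem' := by simp
  neg_mem' := by
    intro a ha
    simp only [Set.mem_setOf_eq, Pi.neg_apply, Finset.sum_neg_distrib] at *
    rw [ha]; ring

/-- The root lattice `Dₙ ⊆ ℤⁿ`. -/
def DnS (n : ℕ) : AddSubgroup (Fin n → ℤ) where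
  carrier := {x | (2 : ℤ) ∣ ∑ i, x i}
  add_mem' := by
    intro a b ha hb
    simp only [Set.mem_setOf_eq, Pi.add_apply, Finset.sum_add_distrib] at *
    exact dvd_add ha hb
  zero_mem' := by simp
  neg_mem' := by
    intro a ha
    simp only [Set.mem_setOf_eq, Pi.neg_apply, Finset.sum_neg_distrib] at *
    exact ha.neg_right

/-- The inner product on a root lattice, restricted from the ambient dot product. -/
def rootF {n : ℕ} (S : AddSubgroup (Fin n → ℤ)) (x y : ↥S) : ℤ := dotF x.val y.val


namespace AnWork
open Equiv Finset

variable {n : ℕ}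

lemma mem_AnS {x : Fin (n+1) → ℤ} : x ∈ AnS n ↔ ∑ i, x i = 0 := Iff.rfl

/-- permutation action on the lattice -/
def permMap (σ : Equiv.Perm (Fin (n+1))) : AddAut ↥(AnS n) :=
  { toFun := fun x => ⟨fun i => (x : Fin (n+1) → ℤ) (σ⁻¹ i), by
      rw [mem_AnS]
      rw [Equiv.sum_comp σ⁻¹ (x : Fin (n+1) → ℤ)]
      exact x.2⟩
    invFun := fun x => ⟨fun i => (x : Fin (n+1) → ℤ) (σ i), by
      rw [mem_AnS]
      rw [Equiv.sum_comp σ (x : Fin (n+1) → ℤ)]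
      exact x.2⟩
    left_inv := fun x => Subtype.ext (funext fun i => by simp)
    right_inv := fun x => Subtype.ext (funext fun i => by simp)
    map_add' := fun x y => rfl }

@[simp] lemma permMap_apply (σ : Equiv.Perm (Fin (n+1))) (x : ↥(AnS n)) (i : Fin (n+1)) :
    ((permMap σ x : ↥(AnS n)) : Fin (n+1) → ℤ) i = (x : Fin (n+1) → ℤ) (σ⁻¹ i) := rfl

lemma permMap_mul (σ τ : Equiv.Perm (Fin (n+1))) :
    permMap (n := n) (σ * τ) = permMap σ * permMap τ := by
  ext x i
  simp [permMap_apply, AddAut.mul_apply]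
  rfl

/-- permMap as a monoid hom -/
def permHom : Equiv.Perm (Fin (n+1)) →* AddAut ↥(AnS n) where
  toFun := permMap
  map_one' := by ext x i; simp [permMap_apply]; rfl
  map_mul' := permMap_mul

lemma permMap_isometry (σ : Equiv.Perm (Fin (n+1))) :
    permMap σ ∈ IsometryGrp (rootF (AnS n)) := by
  intro x y
  show (dotF _ _ : ℤ) = dotF _ _
  unfold dotF
  simp only [permMap_apply]
  rw [Equiv.sum_comp σ⁻¹ (fun i => (x : Fin (n+1) → ℤ) i * (y : Fin (n+1) → ℤ) i)]

end AnWork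
namespace AnWork
open Equiv Finset

variable {n : ℕ}

/-- the root e_i - e_j -/
def vR (i j : Fin (n+1)) : ↥(AnS n) :=
  ⟨fun k => (if k = i then 1 else 0) - (if k = j then 1 else 0), by
    rw [mem_AnS]
    simp [Finset.sum_sub_distrib]⟩

@[simp] lemma vR_coe (i j k : Fin (n+1)) :
    ((vR i j : ↥(AnS n)) : Fin (n+1) → ℤ) k
      = (if k = i then 1 else 0) - (if k = j then 1 else 0) := rfl

@[simp] lemma vR_same (i : Fin (n+1)) : vR (n := n) i i = 0 := by
  apply Subtype.ext; funext k; simp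

lemma B_apply (x y : ↥(AnS n)) :
    rootF (AnS n) x y = ∑ i, (x : Fin (n+1) → ℤ) i * (y : Fin (n+1) → ℤ) i := rfl

lemma B_vR_right (x : ↥(AnS n)) (i j : Fin (n+1)) :
    rootF (AnS n) x (vR i j)
      = (x : Fin (n+1) → ℤ) i - (x : Fin (n+1) → ℤ) j := by
  rw [B_apply]
  simp [mul_sub, Finset.sum_sub_distrib, mul_ite]

lemma B_vR (i j k l : Fin (n+1)) :
    rootF (AnS n) (vR i j) (vR k l)
      = ((if k = i then 1 else 0) - (if k = j then 1 else 0))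
        - ((if l = i then 1 else 0) - (if l = j then 1 else 0)) := by
  rw [B_vR_right]
  simp only [vR_coe]

lemma vR_inj {i j k l : Fin (n+1)} (hij : i ≠ j) (hkl : k ≠ l)
    (h : vR (n := n) i j = vR k l) : i = k ∧ j = l := by
  have hi := congrFun (congrArg Subtype.val h) i
  have hj := congrFun (congrArg Subtype.val h) j
  simp only [vR_coe] at hi hj
  constructor
  · by_cases h1 : i = k
    · exact h1
    · exfalso
      by_cases h2 : i = l
      · have h4 : l ≠ j := fun e => hij (h2.trans e)
        have h5 : l ≠ k := fun e => h1 (h2.trans e)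
        simp [hij, h1, h2, h4, h5] at hi
      · simp [hij, h1, h2] at hi
  · by_cases h2 : j = l
    · exact h2
    · exfalso
      by_cases h3 : j = k
      · have h4 : k ≠ l := hkl
        by_cases h5 : k = i
        · exact hij (h3.trans h5).symm
        · simp [h2, h3, h4, h5] at hj
      · simp [hij.symm, h2, h3] at hj

/-- decomposition of lattice elements in terms of the roots vR j 0 -/
lemma decomp (x : ↥(AnS n)) :
    x = ∑ j, (x : Fin (n+1) → ℤ) j • vR j 0 := by
  apply Subtype.ext; funext k
  have hsum : ∑ i, (x : Fin (n+1) → ℤ) i = 0 := x.2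
  have hcoe : ((↑(∑ j, (x : Fin (n+1) → ℤ) j • vR j 0) : Fin (n+1) → ℤ)) k
      = ∑ j, (x : Fin (n+1) → ℤ) j * (((vR j 0 : ↥(AnS n)) : Fin (n+1) → ℤ)) k := by
    rw [AddSubgroup.val_finset_sum, Finset.sum_apply]
    exact Finset.sum_congr rfl fun j _ => by
      show ((x : Fin (n+1) → ℤ) j • (vR j 0 : ↥(AnS n)).val) k = _
      simp [smul_eq_mul]
  rw [hcoe]
  simp only [vR_coe, mul_sub, Finset.sum_sub_distrib, mul_ite, mul_one, mul_zero]
  rw [Finset.sum_ite_eq Finset.univ k (fun j => (x : Fin (n+1) → ℤ) j)]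
  by_cases hk : k = 0 <;> simp [hk, hsum]

end AnWork
namespace AnWork
open Equiv Finset

variable {n : ℕ}

lemma root_char (x : ↥(AnS n)) (h : rootF (AnS n) x x = 2) :
    ∃ i j, i ≠ j ∧ x = vR i j := by
  set f : Fin (n+1) → ℤ := (x : Fin (n+1) → ℤ) with hf
  have hsum : ∑ i, f i = 0 := x.2
  have hsq : ∑ i, f i * f i = 2 := h
  have hnn : ∀ i ∈ Finset.univ, 0 ≤ f i * f i := fun i _ => mul_self_nonneg _
  -- there is an index with f i ≠ 0
  have hex : ∃ i, f i ≠ 0 := by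
    by_contra hc
    push_neg at hc
    rw [Finset.sum_congr rfl (fun i _ => by rw [hc i, mul_zero])] at hsq
    simp at hsq
  obtain ⟨i, hi⟩ := hex
  have hex2 : ∃ j, j ≠ i ∧ f j ≠ 0 := by
    by_contra hc
    push_neg at hc
    have : ∑ k, f k = f i := by
      rw [← Finset.add_sum_erase _ f (Finset.mem_univ i)]
      rw [Finset.sum_eq_zero (fun k hk => hc k (Finset.ne_of_mem_erase hk))]
      ring
    rw [hsum] at this; exact hi this.symm
  obtain ⟨j, hji, hj⟩ := hex2
  -- squares at i and j already sum to at least 2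
  have h1 : 1 ≤ f i * f i := by rcases hi.lt_or_gt with hl | hl <;> nlinarith
  have h1' : 1 ≤ f j * f j := by rcases hj.lt_or_gt with hl | hl <;> nlinarith
  have hsplit : f i * f i + f j * f j + ∑ k ∈ (Finset.univ.erase i).erase j, f k * f k = 2 := by
    rw [← hsq, ← Finset.add_sum_erase _ (fun k => f k * f k) (Finset.mem_univ i),
      ← Finset.add_sum_erase _ (fun k => f k * f k)
        (Finset.mem_erase.mpr ⟨hji, Finset.mem_univ j⟩)]
    ring
  have hrest : ∀ k, k ≠ i → k ≠ j → f k = 0 := by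
    intro k hki hkj
    have hnn2 : 0 ≤ ∑ m ∈ (Finset.univ.erase i).erase j, f m * f m :=
      Finset.sum_nonneg fun m _ => mul_self_nonneg _
    have hz : ∑ m ∈ (Finset.univ.erase i).erase j, f m * f m = 0 := by omega
    have := (Finset.sum_eq_zero_iff_of_nonneg (fun m _ => mul_self_nonneg (f m))).mp hz k
      (by simp [hki, hkj])
    nlinarith [this]
  -- f i + f j = 0
  have hfij : f i + f j = 0 := by
    have : ∑ k, f k = f i + f j := by
      rw [← Finset.add_sum_erase _ f (Finset.mem_univ i),
        ← Finset.add_sum_erase _ f (Finset.mem_erase.mpr ⟨hji, Finset.mem_univ j⟩),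
        Finset.sum_eq_zero (fun k hk => hrest k
          (Finset.ne_of_mem_erase (Finset.mem_of_mem_erase hk))
          (Finset.ne_of_mem_erase hk))]
      ring
    rw [hsum] at this; linarith [this]
  have hsq2 : f i * f i + f j * f j = 2 := by
    have hnn2 : 0 ≤ ∑ m ∈ (Finset.univ.erase i).erase j, f m * f m :=
      Finset.sum_nonneg fun m _ => mul_self_nonneg _
    omega
  have hval : (f i = 1 ∧ f j = -1) ∨ (f i = -1 ∧ f j = 1) := by
    have := hi.lt_or_gt
    rcases this with hlt | hlt
    · right; constructor <;> nlinarith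
    · left; constructor <;> nlinarith
  have hne : i ≠ j := fun e => hji e.symm
  rcases hval with ⟨h1, h2⟩ | ⟨h1, h2⟩
  · refine ⟨i, j, hne, ?_⟩
    apply Subtype.ext; funext k
    simp only [vR_coe]
    by_cases hk1 : k = i
    · subst hk1; rw [if_pos rfl, if_neg hne]; simpa using h1
    · by_cases hk2 : k = j
      · subst hk2; rw [if_neg hk1, if_pos rfl]; simpa using h2
      · rw [if_neg hk1, if_neg hk2]; simpa using hrest k hk1 hk2
  · refine ⟨j, i, hji, ?_⟩
    apply Subtype.ext; funext k
    simp only [vR_coe]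
    by_cases hk1 : k = i
    · subst hk1; rw [if_neg hne, if_pos rfl]; simpa using h1
    · by_cases hk2 : k = j
      · subst hk2; rw [if_pos rfl, if_neg hji]; simpa using h2
      · rw [if_neg hk2, if_neg hk1]; simpa using hrest k hk1 hk2

end AnWork
namespace AnWork
open Equiv Finset

variable {n : ℕ}

lemma B_one {a b c d : Fin (n+1)} (hab : a ≠ b) (hcd : c ≠ d)
    (h : rootF (AnS n) (vR a b) (vR c d) = 1) :
    (a = c ∧ b ≠ d) ∨ (b = d ∧ a ≠ c) := by
  rw [B_vR] at h
  split_ifs at h <;> simp only [ne_eq, Fin.ext_iff] at * <;> omega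

lemma vR_neg (i j : Fin (n+1)) : vR (n := n) i j = - vR j i := by
  apply Subtype.ext; funext k
  show _ = -(((vR j i : ↥(AnS n)) : Fin (n+1) → ℤ) k)
  simp only [vR_coe]; ring

lemma permMap_vR (σ : Equiv.Perm (Fin (n+1))) (i j : Fin (n+1)) :
    permMap σ (vR i j) = vR (σ i) (σ j) := by
  apply Subtype.ext; funext k
  simp only [permMap_apply, vR_coe]
  have h1 : (σ⁻¹ k = i) = (k = σ i) := by
    simp only [eq_iff_iff]
    constructor
    · intro h; rw [← h]; simp
    · intro h; rw [h]; simp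
  have h2 : (σ⁻¹ k = j) = (k = σ j) := by
    simp only [eq_iff_iff]
    constructor
    · intro h; rw [← h]; simp
    · intro h; rw [h]; simp
  simp only [h1, h2]

end AnWork
namespace AnWork
open Equiv Finset

variable {n : ℕ}

lemma classify (hn : 2 ≤ n) (f : AddAut ↥(AnS n))
    (hf : f ∈ IsometryGrp (rootF (AnS n))) :
    ∃ σ : Equiv.Perm (Fin (n+1)),
      (∀ x, f x = permMap σ x) ∨ (∀ x, f x = - permMap σ x) := by
  have hroot : ∀ j : Fin (n+1), ∃ p : Fin (n+1) × Fin (n+1),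
      j ≠ 0 → (p.1 ≠ p.2 ∧ f (vR j 0) = vR p.1 p.2) := by
    intro j
    by_cases hj : j = 0
    · exact ⟨(0, 0), fun h => absurd hj h⟩
    · have h2 : rootF (AnS n) (f (vR j 0)) (f (vR j 0)) = 2 := by
        rw [hf, B_vR]
        simp [hj, Ne.symm hj]
      obtain ⟨i2, j2, hne, he⟩ := root_char _ h2
      exact ⟨(i2, j2), fun _ => ⟨hne, he⟩⟩
  choose p hp using hroot
  set a : Fin (n+1) → Fin (n+1) := fun j => (p j).1 with ha
  set b : Fin (n+1) → Fin (n+1) := fun j => (p j).2 with hb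
  have hpair : ∀ j k, j ≠ 0 → k ≠ 0 → j ≠ k →
      (a j = a k ∧ b j ≠ b k) ∨ (b j = b k ∧ a j ≠ a k) := by
    intro j k hj hk hjk
    apply B_one (hp j hj).1 (hp k hk).1
    rw [← (hp j hj).2, ← (hp k hk).2, hf, B_vR]
    simp [hj, hk, Ne.symm hjk, Ne.symm hj]
  have hfinj : ∀ j k, j ≠ 0 → k ≠ 0 → a j = a k → b j = b k → j = k := by
    intro j k hj hk hak hbk
    have he : f (vR j 0) = f (vR k 0) := by
      rw [(hp j hj).2, (hp k hk).2]
      show vR (a j) (b j) = vR (a k) (b k)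
      rw [hak, hbk]
    have := f.injective he
    exact (vR_inj hj hk this).1
  -- two distinct nonzero indices
  set j1 : Fin (n+1) := ⟨1, by omega⟩ with hj1def
  set j2 : Fin (n+1) := ⟨2, by omega⟩ with hj2def
  have h10 : j1 ≠ 0 := by simp [hj1def, Fin.ext_iff]
  have h20 : j2 ≠ 0 := by simp [hj2def, Fin.ext_iff]
  have h12 : j1 ≠ j2 := by simp [hj1def, hj2def, Fin.ext_iff]
  by_cases haa : a j1 = a j2
  · -- common head: f = - permMap σ
    have hhead : ∀ j, j ≠ 0 → a j = a j1 := by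
      intro j hj
      by_cases hja : j = j1
      · rw [hja]
      by_cases hjb : j = j2
      · rw [hjb]; exact haa.symm
      rcases hpair j j1 hj h10 hja with ⟨h, _⟩ | ⟨hb1, _⟩
      · exact h
      rcases hpair j j2 hj h20 hjb with ⟨h, _⟩ | ⟨hb2, _⟩
      · exact h.trans haa.symm
      exact absurd (hfinj j1 j2 h10 h20 haa (hb1.symm.trans hb2)) h12
    set s : Fin (n+1) → Fin (n+1) := fun j => if j = 0 then a j1 else b j with hs
    have hanb : ∀ j, j ≠ 0 → a j1 ≠ b j := by
      intro j hj
      rw [← hhead j hj]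
      exact (hp j hj).1
    have hinj : Function.Injective s := by
      intro u v huv
      by_cases hu : u = 0 <;> by_cases hv : v = 0
      · rw [hu, hv]
      · rw [hs] at huv; simp only [hu, if_pos, if_neg hv] at huv
        exact absurd huv (hanb v hv)
      · rw [hs] at huv; simp only [hv, if_neg hu, if_pos] at huv
        exact absurd huv.symm (hanb u hu)
      · rw [hs] at huv; simp only [if_neg hu, if_neg hv] at huv
        exact hfinj u v hu hv ((hhead u hu).trans (hhead v hv).symm) huv
    set σ : Equiv.Perm (Fin (n+1)) :=
      Equiv.ofBijective s (Finite.injective_iff_bijective.mp hinj) with hσ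
    have hσ0 : σ 0 = a j1 := by simp [hσ, Equiv.ofBijective_apply, hs]
    have hσj : ∀ j, j ≠ 0 → σ j = b j := by
      intro j hj; simp [hσ, Equiv.ofBijective_apply, hs, hj]
    refine ⟨σ, Or.inr fun x => ?_⟩
    have key : ∀ j, f (vR j 0) = - permMap σ (vR j 0) := by
      intro j
      by_cases hj : j = 0
      · rw [hj, vR_same, map_zero, map_zero, neg_zero]
      · rw [(hp j hj).2, permMap_vR, hσ0, hσj j hj, ← vR_neg]
        show vR (a j) (b j) = _
        rw [hhead j hj]
    conv_lhs => rw [decomp x]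
    conv_rhs => rw [decomp x]
    rw [map_sum, map_sum, ← Finset.sum_neg_distrib]
    exact Finset.sum_congr rfl fun j _ => by
      rw [map_zsmul, map_zsmul, key j, smul_neg]
  · -- common tail: f = permMap σ
    have hbb : b j1 = b j2 := by
      rcases hpair j1 j2 h10 h20 h12 with ⟨h, _⟩ | ⟨h, _⟩
      · exact absurd h haa
      · exact h
    have htail : ∀ j, j ≠ 0 → b j = b j1 := by
      intro j hj
      by_cases hja : j = j1
      · rw [hja]
      by_cases hjb : j = j2
      · rw [hjb]; exact hbb.symm
      rcases hpair j j1 hj h10 hja with ⟨ha1, _⟩ | ⟨h, _⟩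
      swap
      · exact h
      rcases hpair j j2 hj h20 hjb with ⟨ha2, _⟩ | ⟨h, _⟩
      swap
      · exact h.trans hbb.symm
      exact absurd (ha1.symm.trans ha2) haa
    set s : Fin (n+1) → Fin (n+1) := fun j => if j = 0 then b j1 else a j with hs
    have hanb : ∀ j, j ≠ 0 → b j1 ≠ a j := by
      intro j hj
      rw [← htail j hj]
      exact fun h => (hp j hj).1 h.symm
    have hinj : Function.Injective s := by
      intro u v huv
      by_cases hu : u = 0 <;> by_cases hv : v = 0
      · rw [hu, hv]
      · rw [hs] at huv; simp only [hu, if_pos, if_neg hv] at huv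
        exact absurd huv (hanb v hv)
      · rw [hs] at huv; simp only [hv, if_neg hu, if_pos] at huv
        exact absurd huv.symm (hanb u hu)
      · rw [hs] at huv; simp only [if_neg hu, if_neg hv] at huv
        exact hfinj u v hu hv huv ((htail u hu).trans (htail v hv).symm)
    set σ : Equiv.Perm (Fin (n+1)) :=
      Equiv.ofBijective s (Finite.injective_iff_bijective.mp hinj) with hσ
    have hσ0 : σ 0 = b j1 := by simp [hσ, Equiv.ofBijective_apply, hs]
    have hσj : ∀ j, j ≠ 0 → σ j = a j := by
      intro j hj; simp [hσ, Equiv.ofBijective_apply, hs, hj]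
    refine ⟨σ, Or.inl fun x => ?_⟩
    have key : ∀ j, f (vR j 0) = permMap σ (vR j 0) := by
      intro j
      by_cases hj : j = 0
      · rw [hj, vR_same, map_zero, map_zero]
      · rw [(hp j hj).2, permMap_vR, hσ0, hσj j hj]
        show vR (a j) (b j) = _
        rw [htail j hj]
    conv_lhs => rw [decomp x]
    conv_rhs => rw [decomp x]
    rw [map_sum, map_sum]
    exact Finset.sum_congr rfl fun j _ => by rw [map_zsmul, map_zsmul, key j]

end AnWork
namespace AnWork
open Equiv Finset

variable {n : ℕ}

lemma swap_mem_weyl (i j : Fin (n+1)) (hij : i ≠ j) :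
    permMap (Equiv.swap i j) ∈ WeylGrp (rootF (AnS n)) := by
  apply Subgroup.subset_closure
  refine ⟨vR i j, ?_, ?_⟩
  · rw [B_vR]; simp [hij, Ne.symm hij]
  · intro x
    apply Subtype.ext; funext k
    have hrhs : ((x - rootF (AnS n) x (vR i j) • vR i j : ↥(AnS n)) : Fin (n+1) → ℤ) k
        = (x : Fin (n+1) → ℤ) k - (rootF (AnS n) x (vR i j)) *
            (((vR i j : ↥(AnS n)) : Fin (n+1) → ℤ) k) := by
      show ((x : Fin (n+1) → ℤ) - rootF (AnS n) x (vR i j) • (vR i j : ↥(AnS n)).val) k = _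
      simp [smul_eq_mul]
    rw [hrhs, B_vR_right]
    simp only [permMap_apply, vR_coe]
    rw [Equiv.swap_inv]
    by_cases hk1 : k = i
    · subst hk1; rw [Equiv.swap_apply_left, if_pos rfl, if_neg hij]; ring
    · by_cases hk2 : k = j
      · subst hk2; rw [Equiv.swap_apply_right, if_neg hk1, if_pos rfl]; ring
      · rw [Equiv.swap_apply_of_ne_of_ne hk1 hk2, if_neg hk1, if_neg hk2]; ring

lemma permMap_mem_weyl (σ : Equiv.Perm (Fin (n+1))) :
    permMap σ ∈ WeylGrp (rootF (AnS n)) := by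
  have hσ : σ ∈ Subgroup.closure {τ : Equiv.Perm (Fin (n+1)) | τ.IsSwap} := by
    rw [Equiv.Perm.closure_isSwap]; trivial
  induction hσ using Subgroup.closure_induction with
  | mem τ hτ =>
      obtain ⟨i, j, hij, rfl⟩ := hτ
      exact swap_mem_weyl i j hij
  | one =>
      have : permMap (n := n) 1 = 1 := permHom.map_one
      rw [this]; exact one_mem _
  | mul τ₁ τ₂ _ _ h1 h2 =>
      rw [show permMap (τ₁ * τ₂) = permMap τ₁ * permMap τ₂ from permHom.map_mul τ₁ τ₂]
      exact mul_mem h1 h2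
  | inv τ _ h =>
      rw [show permMap τ⁻¹ = (permMap τ)⁻¹ from permHom.map_inv τ]
      exact inv_mem h

lemma permHom_inj (hn : 2 ≤ n) : Function.Injective (permHom (n := n)) := by
  refine (injective_iff_map_eq_one permHom).mpr fun σ hσ => ?_
  apply Equiv.ext; intro i
  rw [Equiv.Perm.one_apply]
  have hev : ∃ j : Fin (n+1), j ≠ i := by
    by_cases hi : i = 0
    · exact ⟨⟨1, by omega⟩, by simp [hi, Fin.ext_iff]⟩
    · exact ⟨0, fun h => hi h.symm⟩
  obtain ⟨j, hj⟩ := hev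
  have : permMap σ (vR i j) = vR i j := by
    rw [show permMap σ = permHom σ from rfl, hσ]; rfl
  rw [permMap_vR] at this
  exact (vR_inj (σ.injective.ne (Ne.symm hj)) (Ne.symm hj) this).1

set_option maxHeartbeats 1000000 in
lemma order_three_perm (hn : 2 ≤ n) (f : AddAut ↥(AnS n))
    (hf : f ∈ IsometryGrp (rootF (AnS n))) (hord : orderOf f = 3) :
    ∃ σ : Equiv.Perm (Fin (n+1)), orderOf σ = 3 ∧ f = permMap σ := by
  obtain ⟨σ, hσ⟩ := classify hn f hf
  have h3 : f ^ 3 = 1 := by rw [← hord]; exact pow_orderOf_eq_one f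
  have h3x : ∀ x, f (f (f x)) = x := by
    intro x
    have h := DFunLike.congr_fun (congrArg (fun (g : AddAut ↥(AnS n)) => (g : ↥(AnS n) ≃+ ↥(AnS n))) h3) x
    exact h
  rcases hσ with hpos | hneg
  · have hfe : f = permMap σ := AddEquiv.ext hpos
    refine ⟨σ, ?_, hfe⟩
    rw [← hord, hfe, show permMap σ = permHom σ from rfl]
    exact (orderOf_injective permHom (permHom_inj hn) σ).symm
  · exfalso
    -- obtain three distinct indices, opaquely
    obtain ⟨i0, i1, i2, h01, h02, h12⟩ :
        ∃ i0 i1 i2 : Fin (n+1), i0 ≠ i1 ∧ i0 ≠ i2 ∧ i1 ≠ i2 :=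
      ⟨⟨0, by omega⟩, ⟨1, by omega⟩, ⟨2, by omega⟩,
        by simp [Fin.ext_iff], by simp [Fin.ext_iff], by simp [Fin.ext_iff]⟩
    obtain ⟨x0, hx0c⟩ :
        ∃ x0 : ↥(AnS n), ∀ k, (x0 : Fin (n+1) → ℤ) k
          = ((if k = i0 then 1 else 0) - (if k = i1 then 1 else 0))
            + ((if k = i0 then 1 else 0) - (if k = i2 then 1 else 0)) :=
      ⟨vR i0 i1 + vR i0 i2, fun k => rfl⟩
    have hval2 : (x0 : Fin (n+1) → ℤ) i0 = 2 := by
      rw [hx0c]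
      rw [if_pos rfl, if_neg h01, if_neg h02]
      norm_num
    have hge : ∀ k, (-1 : ℤ) ≤ (x0 : Fin (n+1) → ℤ) k := by
      intro k
      rw [hx0c k]
      by_cases hk1 : k = i0 <;> by_cases hk2 : k = i1 <;> by_cases hk3 : k = i2 <;>
        first
          | exact absurd (hk1.symm.trans hk2) h01
          | exact absurd (hk1.symm.trans hk3) h02
          | exact absurd (hk2.symm.trans hk3) h12
          | (simp only [hk1, hk2, hk3, if_pos, if_neg, if_true, if_false]; try omega)
    have hPx : ∀ y, permMap σ y = -(f y) := fun y => by rw [hneg y, neg_neg]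
    have hP3 : ∀ x, permMap σ (permMap σ (permMap σ x)) = -x := by
      intro x
      rw [hPx x, map_neg (permMap σ) (f x), hPx (f x), neg_neg,
        hPx (f (f x)), h3x]
    have hc := congrFun (congrArg Subtype.val (hP3 x0)) (σ (σ (σ i0)))
    have hlhs : (Subtype.val (permMap σ (permMap σ (permMap σ x0)))) (σ (σ (σ i0)))
        = (x0 : Fin (n+1) → ℤ) i0 := by
      show (x0 : Fin (n+1) → ℤ) (σ⁻¹ (σ⁻¹ (σ⁻¹ (σ (σ (σ i0)))))) = _
      rw [Equiv.Perm.coe_inv, Equiv.symm_apply_apply, Equiv.symm_apply_apply,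
        Equiv.symm_apply_apply]
    have hrhs : (Subtype.val (-x0)) (σ (σ (σ i0)))
        = -((x0 : Fin (n+1) → ℤ) (σ (σ (σ i0)))) := rfl
    rw [hlhs, hrhs, hval2] at hc
    have := hge (σ (σ (σ i0)))
    omega

end AnWork
namespace AnWork
open Finset

/-- the sublattice of `Q → ℤ` cut out by a weighted sum-zero condition -/
def wSub {Q : Type*} [Fintype Q] (w : Q → ℤ) : AddSubgroup (Q → ℤ) where
  carrier := {y | ∑ q, w q * y q = 0}
  add_mem' := by
    intro a b ha hb
    simp only [Set.mem_setOf_eq, Pi.add_apply, mul_add, Finset.sum_add_distrib] at *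
    rw [ha, hb]; ring
  zero_mem' := by simp
  neg_mem' := by
    intro a ha
    simp only [Set.mem_setOf_eq, Pi.neg_apply, mul_neg, Finset.sum_neg_distrib] at *
    rw [ha]; ring

lemma mem_wSub {Q : Type*} [Fintype Q] (w : Q → ℤ) (y : Q → ℤ) :
    y ∈ wSub w ↔ ∑ q, w q * y q = 0 := Iff.rfl

/-- splitting off the distinguished coordinate -/
lemma wSub_split {Q : Type*} [Fintype Q] [DecidableEq Q] (w : Q → ℤ) (q₀ : Q)
    (y : Q → ℤ) :
    ∑ q, w q * y q = w q₀ * y q₀ + ∑ q' : {q : Q // q ≠ q₀}, w q'.val * y q'.val := by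
  rw [← Finset.add_sum_erase _ (fun q => w q * y q) (Finset.mem_univ q₀)]
  congr 1
  exact Finset.sum_subtype (Finset.univ.erase q₀)
    (fun x => by simp [Finset.mem_erase]) (fun q => w q * y q)

noncomputable def wSubEquiv {Q : Type*} [Fintype Q] [DecidableEq Q] (w : Q → ℤ) (q₀ : Q)
    (h0 : w q₀ ≠ 0) (hdvd : ∀ q, w q₀ ∣ w q) :
    ↥(wSub w) ≃+ ({q : Q // q ≠ q₀} → ℤ) where
  toFun y := fun q' => y.val q'.val
  invFun z := ⟨fun q => if h : q = q₀ then
      -∑ q' : {q : Q // q ≠ q₀}, (w q'.val / w q₀) * z q' else z ⟨q, h⟩, by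
    rw [mem_wSub, wSub_split w q₀]
    rw [dif_pos rfl]
    have h1 : ∀ q' : {q : Q // q ≠ q₀},
        w q'.val * (if h : q'.val = q₀ then
          -∑ q'' : {q : Q // q ≠ q₀}, (w q''.val / w q₀) * z q'' else z ⟨q'.val, h⟩)
        = w q'.val * z q' := by
      intro q'
      rw [dif_neg q'.2]
    rw [Finset.sum_congr rfl (fun q' _ => h1 q')]
    rw [mul_neg, Finset.mul_sum]
    have h2 : ∀ q' : {q : Q // q ≠ q₀},
        w q₀ * ((w q'.val / w q₀) * z q') = w q'.val * z q' := by
      intro q'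
      rw [← mul_assoc, Int.mul_ediv_cancel' (hdvd q'.val)]
    rw [Finset.sum_congr rfl (fun q' _ => h2 q')]
    ring⟩
  left_inv := by
    intro y
    apply Subtype.ext; funext q
    by_cases h : q = q₀
    · subst h
      show (if h : q = q then _ else _) = _
      rw [dif_pos rfl]
      have hy := (mem_wSub w y.val).mp y.2
      rw [wSub_split w q] at hy
      apply mul_left_cancel₀ h0
      rw [mul_neg, Finset.mul_sum]
      have h2 : ∀ q' : {q' : Q // q' ≠ q},
          w q * ((w q'.val / w q) * y.val q'.val) = w q'.val * y.val q'.val := by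
        intro q'
        rw [← mul_assoc, Int.mul_ediv_cancel' (hdvd q'.val)]
      rw [Finset.sum_congr rfl (fun q' _ => h2 q')]
      linarith [hy]
    · show (if hh : q = q₀ then _ else _) = _
      rw [dif_neg h]
  right_inv := by
    intro z
    funext q'
    show (if h : q'.val = q₀ then _ else _) = _
    rw [dif_neg q'.2]
  map_add' := fun y z => rfl

lemma finrank_wSub {Q : Type*} [Fintype Q] [DecidableEq Q] (w : Q → ℤ) (q₀ : Q)
    (h0 : w q₀ ≠ 0) (hdvd : ∀ q, w q₀ ∣ w q) :
    Module.finrank ℤ ↥(wSub w) = Fintype.card Q - 1 := by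
  have e : ↥(wSub w) ≃ₗ[ℤ] ({q : Q // q ≠ q₀} → ℤ) := (wSubEquiv w q₀ h0 hdvd).toIntLinearEquiv
  rw [LinearEquiv.finrank_eq e]
  rw [Module.finrank_pi ℤ]
  have : Fintype.card {q : Q // q ≠ q₀} = Fintype.card Q - 1 := by
    have h1 := Fintype.card_subtype_compl (fun q : Q => q = q₀)
    have h2 : Fintype.card {q : Q // q = q₀} = 1 := Fintype.card_subtype_eq q₀
    rw [h2] at h1
    exact h1
  rw [this]

end AnWork
namespace AnWork
open Equiv Finset

variable {n : ℕ}

/-- orbit setoid of a permutation -/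
def scSetoid (σ : Equiv.Perm (Fin (n+1))) : Setoid (Fin (n+1)) :=
  ⟨σ.SameCycle, ⟨fun x => ⟨0, rfl⟩, Equiv.Perm.SameCycle.symm, Equiv.Perm.SameCycle.trans⟩⟩

lemma fixed_zpow {σ : Equiv.Perm (Fin (n+1))} {i : Fin (n+1)} (h : σ i = i) (m : ℤ) :
    (σ ^ m) i = i := Equiv.Perm.zpow_apply_eq_self_of_apply_eq_self h m

lemma sc_of_fixed {σ : Equiv.Perm (Fin (n+1))} {i j : Fin (n+1)} (h : σ i = i)
    (hsc : σ.SameCycle j i) : j = i := by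
  obtain ⟨m, hm⟩ := hsc.symm
  rw [fixed_zpow h m] at hm
  exact hm.symm

lemma const_on_cycles {σ : Equiv.Perm (Fin (n+1))} {x : Fin (n+1) → ℤ}
    (hfix : ∀ i, x (σ i) = x i) {i j : Fin (n+1)} (hsc : σ.SameCycle i j) :
    x i = x j := by
  have h2 : ∀ u, x (σ⁻¹ u) = x u := by
    intro u
    conv_rhs => rw [show u = σ (σ⁻¹ u) by simp]
    rw [hfix]
  have key : ∀ m : ℤ, ∀ u, x ((σ ^ m) u) = x u := by
    intro m
    induction m using Int.induction_on with
    | zero => simp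
    | succ k ih =>
        intro u
        have he : (σ ^ ((k : ℤ) + 1)) u = (σ ^ (k : ℤ)) (σ u) := by
          rw [zpow_add_one]
          exact Equiv.Perm.mul_apply _ _ _
        rw [he, ih (σ u), hfix]
    | pred k ih =>
        intro u
        have he : (σ ^ (-(k : ℤ) - 1)) u = (σ ^ (-(k : ℤ))) (σ⁻¹ u) := by
          rw [sub_eq_add_neg, zpow_add, zpow_neg_one]
          exact Equiv.Perm.mul_apply _ _ _
        rw [he, ih (σ⁻¹ u), h2]
  obtain ⟨m, hm⟩ := hsc
  rw [← hm]
  exact (key m i).symm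

section RankComp

variable (σ : Equiv.Perm (Fin (n+1)))

noncomputable local instance : Fintype (Quotient (scSetoid σ)) := Fintype.ofFinite _
noncomputable local instance : DecidableEq (Quotient (scSetoid σ)) := Classical.decEq _

/-- weight function: size of each orbit -/
noncomputable def orbWt : Quotient (scSetoid σ) → ℤ := fun q =>
  ((Finset.univ.filter
      (fun i : Fin (n+1) => Quotient.mk (scSetoid σ) i = q)).card : ℤ)

lemma sum_orbit (y : Quotient (scSetoid σ) → ℤ) :
    ∑ i : Fin (n+1), y (Quotient.mk (scSetoid σ) i) = ∑ q, orbWt σ q * y q := by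
  rw [← Finset.sum_fiberwise Finset.univ (fun i => Quotient.mk (scSetoid σ) i)
    (fun i => y (Quotient.mk (scSetoid σ) i))]
  apply Finset.sum_congr rfl
  intro q _
  have h1 : ∀ i ∈ Finset.univ.filter (fun i => Quotient.mk (scSetoid σ) i = q),
      y (Quotient.mk (scSetoid σ) i) = y q := fun i hi => by
    rw [(Finset.mem_filter.mp hi).2]
  rw [Finset.sum_congr rfl h1, Finset.sum_const, orbWt]
  simp [mul_comm]

/-- the fixed sublattice is the weighted sum-zero lattice on orbits -/
noncomputable def fixedEquiv :
    ↥(fixedPts (permMap (n := n) σ)) ≃+ ↥(wSub (orbWt σ)) :=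
  { toFun := fun x =>
      ⟨fun q => Quotient.liftOn q (fun i => (x.val : Fin (n+1) → ℤ) i) (by
        intro i j hij
        have hfix : ∀ i, (x.val : Fin (n+1) → ℤ) (σ i) = (x.val : Fin (n+1) → ℤ) i := by
          intro i
          have hx := x.2
          have := congrFun (congrArg Subtype.val hx) (σ i)
          rw [permMap_apply, Equiv.Perm.coe_inv, Equiv.symm_apply_apply] at this
          exact this.symm
        exact const_on_cycles hfix hij), by
      rw [mem_wSub, ← sum_orbit σ]
      exact x.val.2⟩
    invFun := fun y =>
      ⟨⟨fun i => y.val (Quotient.mk (scSetoid σ) i), by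
        rw [mem_AnS, sum_orbit σ]
        exact y.2⟩, by
      show permMap σ _ = _
      apply Subtype.ext; funext i
      rw [permMap_apply]
      show y.val (Quotient.mk (scSetoid σ) (σ⁻¹ i)) = y.val (Quotient.mk (scSetoid σ) i)
      exact congrArg y.val (Quotient.sound ⟨1, by simp⟩)⟩
    left_inv := fun x => Subtype.ext (Subtype.ext (funext fun i => rfl))
    right_inv := fun y => Subtype.ext (funext fun q => Quotient.inductionOn q fun i => rfl)
    map_add' := fun x z => Subtype.ext (funext fun q => Quotient.inductionOn q fun i => rfl) }

end RankComp

end AnWork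
namespace AnWork
open Equiv Finset

variable {n : ℕ}

section RankComp2

variable (σ : Equiv.Perm (Fin (n+1)))

noncomputable local instance : Fintype (Quotient (scSetoid σ)) := Fintype.ofFinite _
noncomputable local instance : DecidableEq (Quotient (scSetoid σ)) := Classical.decEq _

lemma mem_fiber (i j : Fin (n+1)) :
    (j ∈ Finset.univ.filter
      (fun k => Quotient.mk (scSetoid σ) k = Quotient.mk (scSetoid σ) i))
    ↔ σ.SameCycle j i := by
  simp only [Finset.mem_filter, Finset.mem_univ, true_and, Quotient.eq]
  exact Iff.rfl

lemma fiber_fixed (i : Fin (n+1)) (h : σ i = i) :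
    Finset.univ.filter
      (fun k => Quotient.mk (scSetoid σ) k = Quotient.mk (scSetoid σ) i) = {i} := by
  ext j
  rw [mem_fiber, Finset.mem_singleton]
  constructor
  · exact sc_of_fixed h
  · rintro rfl; exact ⟨0, rfl⟩

lemma orbWt_fixed (i : Fin (n+1)) (h : σ i = i) :
    orbWt σ (Quotient.mk (scSetoid σ) i) = 1 := by
  rw [orbWt, fiber_fixed σ i h]
  simp

lemma triple_apply (h3 : orderOf σ = 3) : ∀ u, σ (σ (σ u)) = u := by
  have hσ3 : σ ^ 3 = 1 := by rw [← h3]; exact pow_orderOf_eq_one σ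
  intro u
  have h := congrArg (fun τ : Equiv.Perm (Fin (n+1)) => τ u) hσ3
  simp only [Equiv.Perm.one_apply] at h
  rw [pow_succ, sq, Equiv.Perm.mul_apply, Equiv.Perm.mul_apply] at h
  exact h

lemma zpow_two_apply (u : Fin (n+1)) : (σ ^ (2:ℤ)) u = σ (σ u) := by
  have : ((2:ℤ) : ℤ) = ((2:ℕ) : ℤ) := rfl
  rw [show (2:ℤ) = ((2:ℕ) : ℤ) from rfl, zpow_natCast, sq, Equiv.Perm.mul_apply]

lemma fiber_move (h3 : orderOf σ = 3) (i : Fin (n+1)) (h : σ i ≠ i) :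
    Finset.univ.filter
      (fun k => Quotient.mk (scSetoid σ) k = Quotient.mk (scSetoid σ) i)
    = {i, σ i, σ (σ i)} := by
  ext j
  rw [mem_fiber, Finset.mem_insert, Finset.mem_insert, Finset.mem_singleton]
  constructor
  · intro hsc
    obtain ⟨m, hm⟩ := hsc.symm
    rw [← zpow_mod_orderOf σ m, h3] at hm
    rw [show ((3:ℕ):ℤ) = 3 from rfl] at hm
    have hc : m % 3 = 0 ∨ m % 3 = 1 ∨ m % 3 = 2 := by omega
    rcases hc with hc | hc | hc
    · rw [hc] at hm; simp at hm; left; exact hm.symm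
    · rw [hc] at hm; rw [zpow_one] at hm; right; left; exact hm.symm
    · rw [hc] at hm; rw [zpow_two_apply] at hm; right; right; exact hm.symm
  · rintro (rfl | rfl | rfl)
    · exact ⟨0, rfl⟩
    · exact (Equiv.Perm.SameCycle.symm ⟨1, by simp⟩)
    · exact (Equiv.Perm.SameCycle.symm ⟨2, zpow_two_apply σ i⟩)

lemma orbWt_move (h3 : orderOf σ = 3) (i : Fin (n+1)) (h : σ i ≠ i) :
    orbWt σ (Quotient.mk (scSetoid σ) i) = 3 := by
  have d2 : σ (σ i) ≠ i := by
    intro e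
    have := congrArg σ e
    rw [triple_apply σ h3] at this
    exact h this.symm
  have d3 : σ (σ i) ≠ σ i := fun e => h (σ.injective e)
  rw [orbWt, fiber_move σ h3 i h]
  rw [Finset.card_insert_of_notMem (by
    simp only [Finset.mem_insert, Finset.mem_singleton]
    push_neg
    exact ⟨Ne.symm h, Ne.symm d2⟩)]
  rw [Finset.card_insert_of_notMem (by
    simp only [Finset.mem_singleton]
    exact Ne.symm d3)]
  simp

lemma support_card_eq (c : ℕ) (hct : σ.cycleType = Multiset.replicate c 3) :
    σ.support.card = 3 * c := by
  rw [← Equiv.Perm.sum_cycleType, hct, Multiset.sum_replicate, smul_eq_mul, mul_comm]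

lemma card_orbits (h3 : orderOf σ = 3) (c : ℕ)
    (hct : σ.cycleType = Multiset.replicate c 3) :
    Fintype.card (Quotient (scSetoid σ)) + 2 * c = n + 1 := by
  classical
  set mkq : Fin (n+1) → Quotient (scSetoid σ) := Quotient.mk (scSetoid σ) with hmkq
  set fib : Quotient (scSetoid σ) → ℕ :=
    fun q => (Finset.univ.filter (fun i => mkq i = q)).card with hfib
  -- total count
  have htot : ∑ q, fib q = n + 1 := by
    have := Finset.card_eq_sum_card_fiberwise
      (f := mkq) (s := Finset.univ) (t := Finset.univ)
      (fun i _ => Finset.mem_univ _)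
    rw [← this]
    simp
  -- dichotomy for fiber sizes
  have hdich : ∀ q, fib q = 1 ∨ fib q = 3 := by
    intro q
    induction q using Quotient.inductionOn with
    | h i =>
      by_cases hi : σ i = i
      · left
        have := orbWt_fixed σ i hi
        rw [orbWt] at this
        exact_mod_cast this
      · right
        have := orbWt_move σ h3 i hi
        rw [orbWt] at this
        exact_mod_cast this
  -- fixed point count
  have hfixc : (Finset.univ.filter (fun i => σ i = i)).card + 3 * c = n + 1 := by
    have hs : σ.support = Finset.univ.filter (fun i => ¬ σ i = i) := by
      ext j; simp [Equiv.Perm.mem_support]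
    have := Finset.card_filter_add_card_filter_not
      (s := (Finset.univ : Finset (Fin (n+1)))) (fun i => σ i = i)
    rw [← hs, support_card_eq σ c hct] at this
    simpa using this
  -- the set of singleton orbits
  have hA : (Finset.univ.filter (fun i => σ i = i)).card
      = (Finset.univ.filter (fun q => fib q = 1)).card := by
    apply Finset.card_bij (fun i _ => mkq i)
    · intro i hi
      rw [Finset.mem_filter]
      refine ⟨Finset.mem_univ _, ?_⟩
      have := orbWt_fixed σ i (Finset.mem_filter.mp hi).2
      rw [orbWt] at this
      exact_mod_cast this
    · intro i hi j hj he
      have hfi := (Finset.mem_filter.mp hi).2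
      have hfj := (Finset.mem_filter.mp hj).2
      exact sc_of_fixed hfj (Quotient.exact he)
    · intro q hq
      induction q using Quotient.inductionOn with
      | h i =>
        refine ⟨i, ?_, rfl⟩
        rw [Finset.mem_filter]
        refine ⟨Finset.mem_univ _, ?_⟩
        by_contra hi
        have := orbWt_move σ h3 i hi
        rw [orbWt] at this
        have h3' : fib (mkq i) = 3 := by exact_mod_cast this
        have h1' : fib (mkq i) = 1 := (Finset.mem_filter.mp hq).2
        omega
  -- split the total sum
  have hsplit : ∑ q, fib q
      = (Finset.univ.filter (fun q => fib q = 1)).card * 1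
        + (Finset.univ.filter (fun q => ¬ fib q = 1)).card * 3 := by
    rw [← Finset.sum_filter_add_sum_filter_not Finset.univ (fun q => fib q = 1) fib]
    congr 1
    · rw [Finset.sum_congr rfl (fun q hq => (Finset.mem_filter.mp hq).2)]
      simp [mul_comm]
    · rw [Finset.sum_congr rfl (fun q hq => by
        rcases hdich q with h | h
        · exact absurd h (Finset.mem_filter.mp hq).2
        · exact h)]
      simp [mul_comm]
  have hcardQ : (Finset.univ.filter (fun q => fib q = 1)).card
      + (Finset.univ.filter (fun q => ¬ fib q = 1)).card
      = Fintype.card (Quotient (scSetoid σ)) :=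
    Finset.card_filter_add_card_filter_not _
  omega

end RankComp2

end AnWork
namespace AnWork
open Equiv Finset

variable {n : ℕ}

lemma cycleType_order3 (σ : Equiv.Perm (Fin (n+1))) (h3 : orderOf σ = 3) :
    ∃ c : ℕ, 1 ≤ c ∧ σ.cycleType = Multiset.replicate c 3 := by
  have hall : ∀ x ∈ σ.cycleType, x = 3 := by
    intro x hx
    have hdvd : x ∣ 3 := by
      rw [← h3, ← Equiv.Perm.lcm_cycleType]
      exact Multiset.dvd_lcm hx
    have h2 := Equiv.Perm.two_le_of_mem_cycleType hx
    rcases (Nat.dvd_prime Nat.prime_three).mp hdvd with h | h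
    · omega
    · exact h
  refine ⟨Multiset.card σ.cycleType, ?_, Multiset.eq_replicate.mpr ⟨rfl, hall⟩⟩
  by_contra hc
  have h0 : Multiset.card σ.cycleType = 0 := by omega
  have hz : σ.cycleType = 0 := Multiset.card_eq_zero.mp h0
  have h1 : σ = 1 := Equiv.Perm.cycleType_eq_zero.mp hz
  rw [h1] at h3
  simp at h3

section RankFinal

variable (σ : Equiv.Perm (Fin (n+1)))

noncomputable local instance : Fintype (Quotient (scSetoid σ)) := Fintype.ofFinite _
noncomputable local instance : DecidableEq (Quotient (scSetoid σ)) := Classical.decEq _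

lemma fixedRank_permMap (h3 : orderOf σ = 3) (c : ℕ)
    (hct : σ.cycleType = Multiset.replicate c 3) :
    fixedRank (permMap (n := n) σ) + 2 * c = n := by
  have hr : fixedRank (permMap (n := n) σ) = Module.finrank ℤ ↥(wSub (orbWt σ)) :=
    LinearEquiv.finrank_eq (fixedEquiv σ).toIntLinearEquiv
  have hcard := card_orbits σ h3 c hct
  have hQpos : 1 ≤ Fintype.card (Quotient (scSetoid σ)) :=
    Fintype.card_pos_iff.mpr ⟨Quotient.mk _ ⟨0, Nat.succ_pos n⟩⟩
  have hc1 : 1 ≤ c := by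
    by_contra hc0
    have : c = 0 := by omega
    rw [this] at hct
    simp only [Multiset.replicate_zero] at hct
    have h1 : σ = 1 := Equiv.Perm.cycleType_eq_zero.mp hct
    rw [h1] at h3
    simp at h3
  have hrank : Module.finrank ℤ ↥(wSub (orbWt σ))
      = Fintype.card (Quotient (scSetoid σ)) - 1 := by
    by_cases hex : ∃ i, σ i = i
    · obtain ⟨i, hi⟩ := hex
      exact finrank_wSub _ (Quotient.mk _ i)
        (by rw [orbWt_fixed σ i hi]; norm_num)
        (fun q => by rw [orbWt_fixed σ i hi]; exact one_dvd _)
    · push_neg at hex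
      have hall : ∀ q, orbWt σ q = 3 := fun q =>
        Quotient.inductionOn q fun i => orbWt_move σ h3 i (hex i)
      exact finrank_wSub _ (Quotient.mk _ ⟨0, Nat.succ_pos n⟩)
        (by rw [hall]; norm_num)
        (fun q => by rw [hall, hall])
  rw [hr, hrank]
  omega

end RankFinal

/-- packaged main result for one automorphism -/
lemma main_package (hn : 2 ≤ n) (ε : ↥(IsometryGrp (rootF (AnS n))))
    (hord : orderOf ε = 3) :
    ∃ (σ : Equiv.Perm (Fin (n+1))) (c : ℕ),
      (↑ε : AddAut ↥(AnS n)) = permMap σ ∧ orderOf σ = 3 ∧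
      σ.cycleType = Multiset.replicate c 3 ∧ 1 ≤ c ∧ 3 * c ≤ n + 1 ∧
      fixedRank (↑ε : AddAut ↥(AnS n)) + 2 * c = n := by
  have hcoe : orderOf (↑ε : AddAut ↥(AnS n)) = 3 := by
    rw [← hord]
    exact orderOf_injective (IsometryGrp (rootF (AnS n))).subtype
      (Subgroup.subtype_injective _) ε
  obtain ⟨σ, hσ3, hfe⟩ := order_three_perm hn (↑ε) ε.2 hcoe
  obtain ⟨c, hc1, hct⟩ := cycleType_order3 σ hσ3
  have h3c : 3 * c ≤ n + 1 := by
    have := Finset.card_le_univ σ.support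
    rw [support_card_eq σ c hct] at this
    simpa using this
  refine ⟨σ, c, hfe, hσ3, hct, hc1, h3c, ?_⟩
  rw [hfe]
  exact fixedRank_permMap σ hσ3 c hct

end AnWork
/-- Let `n ≥ 2` and `ε ∈ Aut Aₙ` of order 3.  Then `ε ∈ W(Aₙ)` and
`rank Aₙ^ε = n − 2c` for some `1 ≤ c ≤ (n+1)/3`; moreover any two order-3
automorphisms with the same fixed-point rank are conjugate by an element of `W(Aₙ)`. -/
theorem stmt7 (n : ℕ) (hn : 2 ≤ n)
    (ε : ↥(IsometryGrp (rootF (AnS n)))) (hord : orderOf ε = 3) :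
    ((ε : AddAut ↥(AnS n)) ∈ WeylGrp (rootF (AnS n)) ∧
      ∃ c : ℕ, 1 ≤ c ∧ 3 * c ≤ n + 1 ∧
        fixedRank (ε : AddAut ↥(AnS n)) + 2 * c = n) ∧
    (∀ ε₁ ε₂ : ↥(IsometryGrp (rootF (AnS n))), orderOf ε₁ = 3 → orderOf ε₂ = 3 →
      fixedRank (ε₁ : AddAut ↥(AnS n)) = fixedRank (ε₂ : AddAut ↥(AnS n)) →
      ∃ w ∈ WeylGrp (rootF (AnS n)),
        w⁻¹ * (ε₁ : AddAut ↥(AnS n)) * w = (ε₂ : AddAut ↥(AnS n))) := by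
  constructor
  · obtain ⟨σ, c, hfe, hσ3, hct, hc1, h3c, hrk⟩ := AnWork.main_package hn ε hord
    refine ⟨?_, c, hc1, h3c, hrk⟩
    rw [hfe]
    exact AnWork.permMap_mem_weyl σ
  · intro ε₁ ε₂ h1 h2 hrank
    obtain ⟨σ₁, c₁, hfe₁, hσ₁, hct₁, hc₁, h3c₁, hrk₁⟩ := AnWork.main_package hn ε₁ h1
    obtain ⟨σ₂, c₂, hfe₂, hσ₂, hct₂, hc₂, h3c₂, hrk₂⟩ := AnWork.main_package hn ε₂ h2
    have hcc : c₁ = c₂ := by omega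
    have hcyc : σ₁.cycleType = σ₂.cycleType := by rw [hct₁, hct₂, hcc]
    have hconj : IsConj σ₁ σ₂ := Equiv.Perm.isConj_iff_cycleType_eq.mpr hcyc
    obtain ⟨τ, hkey⟩ := isConj_iff.mp hconj
    refine ⟨AnWork.permMap τ⁻¹, AnWork.permMap_mem_weyl τ⁻¹, ?_⟩
    rw [hfe₁, hfe₂]
    have hinv : (AnWork.permMap (n := n) τ⁻¹)⁻¹ = AnWork.permMap τ := by
      have h := map_inv (AnWork.permHom (n := n)) τ
      rw [show AnWork.permMap (n := n) τ⁻¹ = AnWork.permHom (n := n) τ⁻¹ from rfl, h,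
        inv_inv]
      rfl
    rw [hinv]
    rw [show AnWork.permMap (n := n) τ * AnWork.permMap σ₁ * AnWork.permMap τ⁻¹
        = AnWork.permMap (τ * σ₁ * τ⁻¹) from by
      rw [AnWork.permMap_mul, AnWork.permMap_mul]]
    rw [hkey]
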